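/- arXiv:2003.03127 — 3 statements merged into one kernel-verified Lean document; each statement's English description precedes it below -/
import Mathlib

section
/- Let x : Ī → ℝ² be a C² curve with |x_ρ| > 0, τ = x_ρ/|x_ρ|, ν = −τ^⊥, and curvature κ satisfying τ_ρ = κ |x_ρ| ν. Let ρ₀ ∈ ∂I be a boundary point with x(ρ₀)·e₁ = 0, x_ρ(ρ₀)·e₂ = 0 (so that ν(ρ₀)·e₁ = 0 and x_ρ(ρ₀)·e₁ ≠ 0), and suppose x(ρ)·e₁ ≠ 0 for ρ ≠ ρ₀ near ρ₀. Then lim_{ρ→ρ₀} (ν(ρ)·e₁)/(x(ρ)·e₁) = −κ(ρ₀). -/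
open Real Filter

/-- Clockwise rotation by π/2 in ℝ²: `(a,b)^⊥ = (b,−a)`. -/
noncomputable def perp (v : EuclideanSpace ℝ (Fin 2)) : EuclideanSpace ℝ (Fin 2) :=
  WithLp.toLp 2 ![v 1, -v 0]

private lemma div_div_div_same {a b d : ℝ} (hd : d ≠ 0) : (a / d) / (b / d) = a / b := by
  rw [div_div_eq_mul_div, div_mul_cancel₀ _ hd]

/-- Let `x : Ī → ℝ²` be a C² curve with `|x_ρ| > 0`, `τ = x_ρ/|x_ρ|`, `ν = −τ^⊥`,
and curvature `κ` satisfying `τ_ρ = κ |x_ρ| ν`.  At a boundary point `ρ₀` of `I` with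
`x(ρ₀)·e₁ = 0` and `x_ρ(ρ₀)·e₂ = 0` (the 90° contact-angle condition on the axis of
rotation), and with `x(ρ)·e₁ ≠ 0` for `ρ ≠ ρ₀` near `ρ₀` in `I`, we have
`lim_{ρ→ρ₀} (ν(ρ)·e₁)/(x(ρ)·e₁) = −κ(ρ₀)`. -/
theorem stmt_4
    (I : Set ℝ) (ρ₀ : ℝ) (hρ₀I : ρ₀ ∈ I) (hρ₀ : ρ₀ ∈ frontier I)
    (x x' τ ν : ℝ → EuclideanSpace ℝ (Fin 2)) (κ : ℝ → ℝ)
    (hx : ∀ ρ ∈ I, HasDerivWithinAt x (x' ρ) I ρ)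
    (hpos : ∀ ρ ∈ I, 0 < ‖x' ρ‖)
    (hτ : ∀ ρ, τ ρ = ‖x' ρ‖⁻¹ • x' ρ)
    (hν : ∀ ρ, ν ρ = -perp (τ ρ))
    (hFrenet : ∀ ρ ∈ I, HasDerivWithinAt τ ((κ ρ * ‖x' ρ‖) • ν ρ) I ρ)
    (haxis : x ρ₀ 0 = 0)
    (hcontact : x' ρ₀ 1 = 0)
    (hne : ∀ᶠ ρ in nhdsWithin ρ₀ (I \ {ρ₀}), x ρ 0 ≠ 0) :
    Tendsto (fun ρ => ν ρ 0 / x ρ 0) (nhdsWithin ρ₀ (I \ {ρ₀}))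
      (nhds (-(κ ρ₀))) := by
  have hcpos : 0 < ‖x' ρ₀‖ := hpos ρ₀ hρ₀I
  have hcne : ‖x' ρ₀‖ ≠ 0 := ne_of_gt hcpos
  -- x' ρ₀ 0 ≠ 0
  have hx0 : x' ρ₀ 0 ≠ 0 := by
    intro h
    have hz : x' ρ₀ = 0 := by
      ext i
      fin_cases i
      · simpa using h
      · simpa using hcontact
    rw [hz, norm_zero] at hcpos
    exact lt_irrefl 0 hcpos
  -- derivative of the denominator component
  have hg : HasDerivWithinAt (fun ρ => x ρ 0) (x' ρ₀ 0) I ρ₀ := by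
    have h := ((EuclideanSpace.proj (0 : Fin 2)).hasFDerivAt.comp_hasDerivWithinAt ρ₀ (hx ρ₀ hρ₀I))
    simp at h; exact h
  -- derivative of τ · e₂
  have hτ1 : HasDerivWithinAt (fun ρ => τ ρ 1) ((κ ρ₀ * ‖x' ρ₀‖) * ν ρ₀ 1) I ρ₀ := by
    have h := ((EuclideanSpace.proj (1 : Fin 2)).hasFDerivAt.comp_hasDerivWithinAt ρ₀
        (hFrenet ρ₀ hρ₀I))
    simp at h; exact h
  -- ν ρ 0 = -(τ ρ 1), ν ρ 1 = τ ρ 0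
  have hν0 : ∀ ρ, ν ρ 0 = -(τ ρ 1) := by
    intro ρ; rw [hν ρ]; simp [perp]
  have hν1 : ν ρ₀ 1 = τ ρ₀ 0 := by
    rw [hν ρ₀]; simp [perp]
  have hτ0 : τ ρ₀ 0 = ‖x' ρ₀‖⁻¹ * x' ρ₀ 0 := by
    rw [hτ ρ₀]; simp [PiLp.smul_apply]
  have hτ10 : τ ρ₀ 1 = 0 := by
    rw [hτ ρ₀]
    simp [PiLp.smul_apply, hcontact]
  -- derivative of the numerator component
  have hf : HasDerivWithinAt (fun ρ => ν ρ 0) (-(κ ρ₀ * x' ρ₀ 0)) I ρ₀ := by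
    have := hτ1.neg
    have heq : -((κ ρ₀ * ‖x' ρ₀‖) * ν ρ₀ 1) = -(κ ρ₀ * x' ρ₀ 0) := by
      rw [hν1, hτ0]
      field_simp
    rw [heq] at this
    exact this.congr (fun ρ _ => hν0 ρ) (hν0 ρ₀)
  -- values at ρ₀ vanish
  have hf0 : ν ρ₀ 0 = 0 := by rw [hν0 ρ₀, hτ10, neg_zero]
  -- slopes
  have hfs : Tendsto (slope (fun ρ => ν ρ 0) ρ₀) (nhdsWithin ρ₀ (I \ {ρ₀}))
      (nhds (-(κ ρ₀ * x' ρ₀ 0))) := hasDerivWithinAt_iff_tendsto_slope.mp hf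
  have hgs : Tendsto (slope (fun ρ => x ρ 0) ρ₀) (nhdsWithin ρ₀ (I \ {ρ₀}))
      (nhds (x' ρ₀ 0)) := hasDerivWithinAt_iff_tendsto_slope.mp hg
  have hdiv := hfs.div hgs hx0
  have hlim : -(κ ρ₀ * x' ρ₀ 0) / x' ρ₀ 0 = -(κ ρ₀) := by
    field_simp
  rw [hlim] at hdiv
  refine hdiv.congr' ?_
  filter_upwards [self_mem_nhdsWithin] with ρ hρ
  have hρne : ρ ≠ ρ₀ := hρ.2
  have hd : ρ - ρ₀ ≠ 0 := sub_ne_zero.mpr hρne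
  simp only [Pi.div_apply]
  rw [slope_def_field, slope_def_field, hf0, haxis, sub_zero, sub_zero,
    div_div_div_same hd]
end

section
/- Let x : [0,1] × [0,T] → ℝ² be C² in space and C¹ in time with |x_ρ| > 0, and suppose x(0,t)·e₁ = x(1,t)·e₁ = 0 for all t. Let ν = −(x_ρ/|x_ρ|)^⊥ and define the enclosed-volume functional V(t) = π ∫₀¹ (x·e₁)² ν·e₁ |x_ρ| dρ (equivalently V(t) = −π ∫₀¹ (x·e₁)² x_ρ·e₂ dρ). Then for all t ∈ (0,T), (d/dt) V(t) = 2π ∫₀¹ (x·e₁) x_t·ν |x_ρ| dρ. -/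
open Real MeasureTheory

lemma hasDerivAt_proj {f : ℝ → EuclideanSpace ℝ (Fin 2)} {f' : EuclideanSpace ℝ (Fin 2)} {t : ℝ}
    (i : Fin 2) (h : HasDerivAt f f' t) : HasDerivAt (fun s => f s i) (f' i) t := by
  exact ((EuclideanSpace.proj i).hasFDerivAt.comp_hasDerivAt t h :)

lemma continuousOn_proj {α} [TopologicalSpace α] {f : α → EuclideanSpace ℝ (Fin 2)} {s : Set α}
    (h : ContinuousOn f s) (i : Fin 2) : ContinuousOn (fun p => f p i) s :=
  (EuclideanSpace.proj i).continuous.comp_continuousOn h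

/-- Let `x(ρ,t)`, `ρ ∈ [0,1]`, be a family of generating curves, C² in space and C¹ in time,
with `|x_ρ| > 0`, beginning and ending on the axis of rotation:
`x(0,t)·e₁ = x(1,t)·e₁ = 0`.  With `ν = −(x_ρ/|x_ρ|)^⊥`, the enclosed volume
`V(t) = π ∫₀¹ (x·e₁)² ν·e₁ |x_ρ| dρ` satisfies
`(d/dt) V(t) = 2π ∫₀¹ (x·e₁) x_t·ν |x_ρ| dρ` for `t ∈ (0,T)`. -/
theorem stmt_6
    (T : ℝ) (hT : 0 < T)
    (x xρ xt xtρ : ℝ → ℝ → EuclideanSpace ℝ (Fin 2))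
    (ν : ℝ → ℝ → EuclideanSpace ℝ (Fin 2))
    -- spatial derivative and time derivative
    (hxρ : ∀ t ∈ Set.Icc 0 T, ∀ ρ ∈ Set.Icc (0:ℝ) 1, HasDerivAt (fun r => x r t) (xρ ρ t) ρ)
    (hxt : ∀ t ∈ Set.Ioo 0 T, ∀ ρ ∈ Set.Icc (0:ℝ) 1, HasDerivAt (fun s => x ρ s) (xt ρ t) t)
    -- mixed second derivative (equality of the two mixed partials)
    (hxρt : ∀ t ∈ Set.Ioo 0 T, ∀ ρ ∈ Set.Icc (0:ℝ) 1, HasDerivAt (fun s => xρ ρ s) (xtρ ρ t) t)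
    (hxtρ : ∀ t ∈ Set.Ioo 0 T, ∀ ρ ∈ Set.Icc (0:ℝ) 1, HasDerivAt (fun r => xt r t) (xtρ ρ t) ρ)
    -- continuity of the fields on [0,1] × [0,T]
    (hcx : ContinuousOn (fun p : ℝ × ℝ => x p.1 p.2) (Set.Icc 0 1 ×ˢ Set.Icc 0 T))
    (hcxρ : ContinuousOn (fun p : ℝ × ℝ => xρ p.1 p.2) (Set.Icc 0 1 ×ˢ Set.Icc 0 T))
    (hcxt : ContinuousOn (fun p : ℝ × ℝ => xt p.1 p.2) (Set.Icc 0 1 ×ˢ Set.Icc 0 T))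
    (hcxtρ : ContinuousOn (fun p : ℝ × ℝ => xtρ p.1 p.2) (Set.Icc 0 1 ×ˢ Set.Icc 0 T))
    (hpos : ∀ t ∈ Set.Icc 0 T, ∀ ρ ∈ Set.Icc (0:ℝ) 1, 0 < ‖xρ ρ t‖)
    -- the generating curve begins and ends on the axis of rotation
    (hbc0 : ∀ t ∈ Set.Icc 0 T, x 0 t 0 = 0)
    (hbc1 : ∀ t ∈ Set.Icc 0 T, x 1 t 0 = 0)
    -- the unit normal
    (hν : ∀ ρ t, ν ρ t = -perp (‖xρ ρ t‖⁻¹ • xρ ρ t))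
    (V : ℝ → ℝ)
    (hV : ∀ t, V t = π * ∫ ρ in (0:ℝ)..1, (x ρ t 0) ^ 2 * (ν ρ t 0) * ‖xρ ρ t‖) :
    ∀ t ∈ Set.Ioo 0 T,
      HasDerivAt V
        (2 * π * ∫ ρ in (0:ℝ)..1,
          (x ρ t 0) * (inner ℝ (xt ρ t) (ν ρ t) : ℝ) * ‖xρ ρ t‖) t := by
  intro t₀ ht₀
  have ht₀Icc : t₀ ∈ Set.Icc 0 T := Set.mem_Icc_of_Ioo ht₀
  have huIcc : Set.uIcc (0:ℝ) 1 = Set.Icc 0 1 := Set.uIcc_of_le zero_le_one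
  have huIoc : Set.uIoc (0:ℝ) 1 = Set.Ioc 0 1 := Set.uIoc_of_le zero_le_one
  -- pointwise form of the integrand of V
  have hA : ∀ s ∈ Set.Icc 0 T, ∀ ρ ∈ Set.Icc (0:ℝ) 1,
      (x ρ s 0) ^ 2 * (ν ρ s 0) * ‖xρ ρ s‖ = -((x ρ s 0) ^ 2 * xρ ρ s 1) := by
    intro s hs ρ hρ
    have hn : ‖xρ ρ s‖ ≠ 0 := (hpos s hs ρ hρ).ne'
    rw [hν]
    have h0 : (-perp (‖xρ ρ s‖⁻¹ • xρ ρ s)) 0 = -(‖xρ ρ s‖⁻¹ * xρ ρ s 1) := by simp [perp]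
    rw [h0]
    field_simp
  -- pointwise form of the integrand of the claimed derivative
  have hB : ∀ s ∈ Set.Icc 0 T, ∀ ρ ∈ Set.Icc (0:ℝ) 1,
      (x ρ s 0) * (inner ℝ (xt ρ s) (ν ρ s) : ℝ) * ‖xρ ρ s‖
        = x ρ s 0 * (-(xt ρ s 0 * xρ ρ s 1) + xt ρ s 1 * xρ ρ s 0) := by
    intro s hs ρ hρ
    have hn : ‖xρ ρ s‖ ≠ 0 := (hpos s hs ρ hρ).ne'
    rw [hν, PiLp.inner_apply]
    have h0 : (-perp (‖xρ ρ s‖⁻¹ • xρ ρ s)) 0 = -(‖xρ ρ s‖⁻¹ * xρ ρ s 1) := by simp [perp]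
    have h1 : (-perp (‖xρ ρ s‖⁻¹ • xρ ρ s)) 1 = ‖xρ ρ s‖⁻¹ * xρ ρ s 0 := by simp [perp]
    rw [Fin.sum_univ_two, h0, h1]
    simp only [RCLike.inner_apply, conj_trivial]
    field_simp
  -- continuity in ρ of components, for fixed time
  have hcomp : ∀ (f : ℝ → ℝ → EuclideanSpace ℝ (Fin 2)),
      ContinuousOn (fun p : ℝ × ℝ => f p.1 p.2) (Set.Icc 0 1 ×ˢ Set.Icc 0 T) →
      ∀ s ∈ Set.Icc 0 T, ∀ i : Fin 2, ContinuousOn (fun ρ => f ρ s i) (Set.Icc (0:ℝ) 1) := by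
    intro f hf s hs i
    have h1 : ContinuousOn (fun ρ : ℝ => f ρ s) (Set.Icc 0 1) := by
      have := hf.comp ((Continuous.prodMk_left s).continuousOn :
          ContinuousOn (fun ρ : ℝ => (ρ, s)) (Set.Icc 0 1))
        (fun ρ hρ => Set.mk_mem_prod hρ hs)
      exact this
    exact continuousOn_proj h1 i
  -- the reduced integrand and its time derivative
  set F : ℝ → ℝ → ℝ := fun s ρ => -((x ρ s 0) ^ 2 * xρ ρ s 1) with hFdef
  set F' : ℝ → ℝ → ℝ := fun s ρ =>
    -(2 * x ρ s 0 * xt ρ s 0 * xρ ρ s 1 + (x ρ s 0) ^ 2 * xtρ ρ s 1) with hF'def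
  -- a ball around t₀ inside (0,T)
  obtain ⟨ε, hε, hball⟩ : ∃ ε > 0, Metric.ball t₀ ε ⊆ Set.Ioo 0 T :=
    Metric.isOpen_iff.mp isOpen_Ioo t₀ ht₀
  -- continuity of F s on [0,1] for s ∈ [0,T]
  have hFcont : ∀ s ∈ Set.Icc 0 T, ContinuousOn (F s) (Set.Icc (0:ℝ) 1) := by
    intro s hs
    exact (((hcomp x hcx s hs 0).pow 2).mul (hcomp xρ hcxρ s hs 1)).neg
  -- joint continuity of F'
  have hF'jcont : ContinuousOn (fun p : ℝ × ℝ => F' p.2 p.1) (Set.Icc 0 1 ×ˢ Set.Icc 0 T) := by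
    have c0 := continuousOn_proj hcx (0 : Fin 2)
    have c1 := continuousOn_proj hcxt (0 : Fin 2)
    have c2 := continuousOn_proj hcxρ (1 : Fin 2)
    have c3 := continuousOn_proj hcxtρ (1 : Fin 2)
    exact ((((continuousOn_const.mul c0).mul c1).mul c2).add ((c0.pow 2).mul c3)).neg
  obtain ⟨C, hC⟩ := (isCompact_Icc.prod isCompact_Icc).exists_bound_of_continuousOn hF'jcont
  -- differentiation under the integral sign
  have hMain : HasDerivAt (fun s => ∫ ρ in (0:ℝ)..1, F s ρ) (∫ ρ in (0:ℝ)..1, F' t₀ ρ) t₀ := by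
    refine (intervalIntegral.hasDerivAt_integral_of_dominated_loc_of_deriv_le (bound := fun _ => C) (Metric.ball_mem_nhds t₀ hε) ?_ ?_ ?_ ?_ ?_ ?_).2
    · filter_upwards [Metric.ball_mem_nhds t₀ hε] with s hs
      have hsIcc : s ∈ Set.Icc 0 T := Set.mem_Icc_of_Ioo (hball hs)
      exact ((hFcont s hsIcc).mono (by rw [huIoc]; exact Set.Ioc_subset_Icc_self)).aestronglyMeasurable
        measurableSet_uIoc
    · exact (hFcont t₀ ht₀Icc).intervalIntegrable_of_Icc zero_le_one
    · have : ContinuousOn (F' t₀) (Set.Icc (0:ℝ) 1) := by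
        exact ((((continuousOn_const.mul (hcomp x hcx t₀ ht₀Icc 0)).mul
          (hcomp xt hcxt t₀ ht₀Icc 0)).mul (hcomp xρ hcxρ t₀ ht₀Icc 1)).add
          (((hcomp x hcx t₀ ht₀Icc 0).pow 2).mul (hcomp xtρ hcxtρ t₀ ht₀Icc 1))).neg
      exact (this.mono (by rw [huIoc]; exact Set.Ioc_subset_Icc_self)).aestronglyMeasurable
        measurableSet_uIoc
    · refine Filter.Eventually.of_forall fun ρ hρ s hs => ?_
      have hρIcc : ρ ∈ Set.Icc (0:ℝ) 1 := Set.Ioc_subset_Icc_self (huIoc ▸ hρ)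
      have hsIcc : s ∈ Set.Icc 0 T := Set.mem_Icc_of_Ioo (hball hs)
      exact hC (ρ, s) (Set.mk_mem_prod hρIcc hsIcc)
    · exact intervalIntegrable_const
    · refine Filter.Eventually.of_forall fun ρ hρ s hs => ?_
      have hρIcc : ρ ∈ Set.Icc (0:ℝ) 1 := Set.Ioc_subset_Icc_self (huIoc ▸ hρ)
      have hsIoo : s ∈ Set.Ioo 0 T := hball hs
      have h1 : HasDerivAt (fun s' => x ρ s' 0) (xt ρ s 0) s :=
        hasDerivAt_proj 0 (hxt s hsIoo ρ hρIcc)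
      have h2 : HasDerivAt (fun s' => xρ ρ s' 1) (xtρ ρ s 1) s :=
        hasDerivAt_proj 1 (hxρt s hsIoo ρ hρIcc)
      have := ((h1.pow 2).mul h2).neg
      convert this using 1
      simp [hF'def]
      · rfl
      · simp [hF'def]
  -- V agrees with π * ∫ F near t₀
  have hVeq : ∀ s ∈ Set.Ioo 0 T, V s = π * ∫ ρ in (0:ℝ)..1, F s ρ := by
    intro s hs
    rw [hV s]
    congr 1
    refine intervalIntegral.integral_congr ?_
    intro ρ hρ
    exact hA s (Set.mem_Icc_of_Ioo hs) ρ (huIcc ▸ hρ)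
  have hVderiv : HasDerivAt V (π * ∫ ρ in (0:ℝ)..1, F' t₀ ρ) t₀ := by
    refine (hMain.const_mul π).congr_of_eventuallyEq ?_
    filter_upwards [isOpen_Ioo.mem_nhds ht₀] with s hs
    exact hVeq s hs
  -- fundamental theorem of calculus for the boundary term
  have hDcont : ContinuousOn (fun ρ => 2 * x ρ t₀ 0 * xρ ρ t₀ 0 * xt ρ t₀ 1
      + (x ρ t₀ 0) ^ 2 * xtρ ρ t₀ 1) (Set.Icc (0:ℝ) 1) :=
    (((continuousOn_const.mul (hcomp x hcx t₀ ht₀Icc 0)).mul (hcomp xρ hcxρ t₀ ht₀Icc 0)).mul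
      (hcomp xt hcxt t₀ ht₀Icc 1)).add
      (((hcomp x hcx t₀ ht₀Icc 0).pow 2).mul (hcomp xtρ hcxtρ t₀ ht₀Icc 1))
  have hFTC : (∫ ρ in (0:ℝ)..1, (2 * x ρ t₀ 0 * xρ ρ t₀ 0 * xt ρ t₀ 1
      + (x ρ t₀ 0) ^ 2 * xtρ ρ t₀ 1)) = 0 := by
    have := intervalIntegral.integral_eq_sub_of_hasDerivAt
      (f := fun ρ => (x ρ t₀ 0) ^ 2 * xt ρ t₀ 1)
      (f' := fun ρ => 2 * x ρ t₀ 0 * xρ ρ t₀ 0 * xt ρ t₀ 1 + (x ρ t₀ 0) ^ 2 * xtρ ρ t₀ 1)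
      (a := 0) (b := 1) ?_ (hDcont.intervalIntegrable_of_Icc zero_le_one)
    · rw [this]
      simp [hbc0 t₀ ht₀Icc, hbc1 t₀ ht₀Icc]
    · intro ρ hρ
      have hρIcc : ρ ∈ Set.Icc (0:ℝ) 1 := huIcc ▸ hρ
      have h1 : HasDerivAt (fun r => x r t₀ 0) (xρ ρ t₀ 0) ρ :=
        hasDerivAt_proj 0 (hxρ t₀ ht₀Icc ρ hρIcc)
      have h2 : HasDerivAt (fun r => xt r t₀ 1) (xtρ ρ t₀ 1) ρ :=
        hasDerivAt_proj 1 (hxtρ t₀ ht₀ ρ hρIcc)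
      have := (h1.pow 2).mul h2
      convert this using 1
      · rfl
      · rfl
      · simp
  -- identify the derivative with the claimed expression
  have hG'cont : ContinuousOn (fun ρ => x ρ t₀ 0 * (-(xt ρ t₀ 0 * xρ ρ t₀ 1)
      + xt ρ t₀ 1 * xρ ρ t₀ 0)) (Set.Icc (0:ℝ) 1) :=
    (hcomp x hcx t₀ ht₀Icc 0).mul
      ((((hcomp xt hcxt t₀ ht₀Icc 0).mul (hcomp xρ hcxρ t₀ ht₀Icc 1)).neg).add
        ((hcomp xt hcxt t₀ ht₀Icc 1).mul (hcomp xρ hcxρ t₀ ht₀Icc 0)))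
  have key : π * ∫ ρ in (0:ℝ)..1, F' t₀ ρ
      = 2 * π * ∫ ρ in (0:ℝ)..1,
          (x ρ t₀ 0) * (inner ℝ (xt ρ t₀) (ν ρ t₀) : ℝ) * ‖xρ ρ t₀‖ := by
    have hGeq : (∫ ρ in (0:ℝ)..1, (x ρ t₀ 0) * (inner ℝ (xt ρ t₀) (ν ρ t₀) : ℝ) * ‖xρ ρ t₀‖)
        = ∫ ρ in (0:ℝ)..1, x ρ t₀ 0 * (-(xt ρ t₀ 0 * xρ ρ t₀ 1) + xt ρ t₀ 1 * xρ ρ t₀ 0) := by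
      refine intervalIntegral.integral_congr fun ρ hρ => ?_
      exact hB t₀ ht₀Icc ρ (huIcc ▸ hρ)
    rw [hGeq]
    have hsplit : (∫ ρ in (0:ℝ)..1, F' t₀ ρ)
        = (∫ ρ in (0:ℝ)..1, 2 * (x ρ t₀ 0 * (-(xt ρ t₀ 0 * xρ ρ t₀ 1) + xt ρ t₀ 1 * xρ ρ t₀ 0)))
          - ∫ ρ in (0:ℝ)..1, (2 * x ρ t₀ 0 * xρ ρ t₀ 0 * xt ρ t₀ 1
            + (x ρ t₀ 0) ^ 2 * xtρ ρ t₀ 1) := by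
      rw [← intervalIntegral.integral_sub
        ((hG'cont.intervalIntegrable_of_Icc zero_le_one).const_mul 2)
        (hDcont.intervalIntegrable_of_Icc zero_le_one)]
      refine intervalIntegral.integral_congr fun ρ _ => ?_
      simp only [hF'def]
      ring
    rw [hsplit, hFTC, intervalIntegral.integral_const_mul]
    ring
  rw [← key]
  exact hVderiv
end

section
/- Let Z, η : [0,1] → ℝ² be C¹ with Z(0)·e₁ = Z(1)·e₁ = 0, and define the volume functional V(Z) = −π ∫₀¹ (Z·e₁)² (Z_ρ)^⊥·e₁ dρ. Then the first variation of V at Z in direction η is given by (d/dε) V(Z + ε η) |_{ε=0} = −2π ∫₀¹ (Z·e₁) η·(Z_ρ)^⊥ dρ. -/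
open Real MeasureTheory

/-- First variation of the enclosed-volume functional
`V(Z) = −π ∫₀¹ (Z·e₁)² (Z_ρ)^⊥·e₁ dρ`:  for C¹ curves `Z, η : [0,1] → ℝ²` with
`Z(0)·e₁ = Z(1)·e₁ = 0`,
`(d/dε) V(Z + ε η) |_{ε=0} = −2π ∫₀¹ (Z·e₁) η·(Z_ρ)^⊥ dρ`. -/
theorem stmt_8
    (Z Z' η η' : ℝ → EuclideanSpace ℝ (Fin 2))
    (hZ : ∀ ρ ∈ Set.Icc (0:ℝ) 1, HasDerivAt Z (Z' ρ) ρ)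
    (hη : ∀ ρ ∈ Set.Icc (0:ℝ) 1, HasDerivAt η (η' ρ) ρ)
    (hcZ : ContinuousOn Z (Set.Icc 0 1)) (hcZ' : ContinuousOn Z' (Set.Icc 0 1))
    (hcη : ContinuousOn η (Set.Icc 0 1)) (hcη' : ContinuousOn η' (Set.Icc 0 1))
    (hbc0 : Z 0 0 = 0) (hbc1 : Z 1 0 = 0) :
    HasDerivAt
      (fun ε : ℝ => -π * ∫ ρ in (0:ℝ)..1, ((Z ρ + ε • η ρ) 0) ^ 2 * (perp (Z' ρ + ε • η' ρ) 0))
      (-2 * π * ∫ ρ in (0:ℝ)..1, (Z ρ 0) * (inner ℝ (η ρ) (perp (Z' ρ)) : ℝ))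
      0 := by
  have huIcc : Set.uIcc (0:ℝ) 1 = Set.Icc 0 1 := Set.uIcc_of_le zero_le_one
  -- continuity of components
  have ev : ∀ (i : Fin 2) (f : ℝ → EuclideanSpace ℝ (Fin 2)),
      ContinuousOn f (Set.Icc 0 1) → ContinuousOn (fun ρ => f ρ i) (Set.Icc 0 1) :=
    fun i f hf => (EuclideanSpace.proj i).continuous.comp_continuousOn hf
  have cZ0 := ev 0 Z hcZ
  have cZ'0 := ev 0 Z' hcZ'
  have cZ'1 := ev 1 Z' hcZ'
  have cη0 := ev 0 η hcη
  have cη1 := ev 1 η hcη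
  have cη'1 := ev 1 η' hcη'
  -- derivatives of components
  have dZ : ∀ i : Fin 2, ∀ ρ ∈ Set.Icc (0:ℝ) 1, HasDerivAt (fun ρ => Z ρ i) (Z' ρ i) ρ :=
    fun i ρ hρ => (EuclideanSpace.proj i : EuclideanSpace ℝ (Fin 2) →L[ℝ] ℝ).hasFDerivAt.comp_hasDerivAt ρ (hZ ρ hρ)
  have dη : ∀ i : Fin 2, ∀ ρ ∈ Set.Icc (0:ℝ) 1, HasDerivAt (fun ρ => η ρ i) (η' ρ i) ρ :=
    fun i ρ hρ => (EuclideanSpace.proj i : EuclideanSpace ℝ (Fin 2) →L[ℝ] ℝ).hasFDerivAt.comp_hasDerivAt ρ (hη ρ hρ)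
  set A : ℝ := ∫ ρ in (0:ℝ)..1, (Z ρ 0)^2 * Z' ρ 1 with hA
  set B : ℝ := ∫ ρ in (0:ℝ)..1, (2*Z ρ 0*η ρ 0*Z' ρ 1 + (Z ρ 0)^2 * η' ρ 1) with hB
  set C : ℝ := ∫ ρ in (0:ℝ)..1, ((η ρ 0)^2*Z' ρ 1 + 2*Z ρ 0*η ρ 0*η' ρ 1) with hC
  set D : ℝ := ∫ ρ in (0:ℝ)..1, (η ρ 0)^2 * η' ρ 1 with hD
  have iA : IntervalIntegrable (fun ρ => (Z ρ 0)^2 * Z' ρ 1) volume 0 1 :=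
    (((cZ0.pow 2).mul cZ'1)).intervalIntegrable_of_Icc zero_le_one
  have iB : IntervalIntegrable (fun ρ => 2*Z ρ 0*η ρ 0*Z' ρ 1 + (Z ρ 0)^2 * η' ρ 1)
      volume 0 1 :=
    (((((continuousOn_const.mul cZ0).mul cη0).mul cZ'1).add
      ((cZ0.pow 2).mul cη'1))).intervalIntegrable_of_Icc zero_le_one
  have iC : IntervalIntegrable (fun ρ => (η ρ 0)^2*Z' ρ 1 + 2*Z ρ 0*η ρ 0*η' ρ 1)
      volume 0 1 :=
    ((((cη0.pow 2).mul cZ'1).add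
      (((continuousOn_const.mul cZ0).mul cη0).mul cη'1))).intervalIntegrable_of_Icc zero_le_one
  have iD : IntervalIntegrable (fun ρ => (η ρ 0)^2 * η' ρ 1) volume 0 1 :=
    (((cη0.pow 2).mul cη'1)).intervalIntegrable_of_Icc zero_le_one
  -- the functional is a cubic polynomial in ε
  have key : ∀ ε : ℝ,
      (∫ ρ in (0:ℝ)..1, ((Z ρ + ε • η ρ) 0)^2 * (perp (Z' ρ + ε • η' ρ) 0))
        = A + ε*B + ε^2*C + ε^3*D := by
    intro ε
    have h1 : ∀ ρ : ℝ, ((Z ρ + ε • η ρ) 0)^2 * (perp (Z' ρ + ε • η' ρ) 0)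
        = (Z ρ 0)^2 * Z' ρ 1
          + ε*(2*Z ρ 0*η ρ 0*Z' ρ 1 + (Z ρ 0)^2 * η' ρ 1)
          + ε^2*((η ρ 0)^2*Z' ρ 1 + 2*Z ρ 0*η ρ 0*η' ρ 1)
          + ε^3*((η ρ 0)^2 * η' ρ 1) := by
      intro ρ
      simp only [perp, PiLp.add_apply, PiLp.smul_apply, smul_eq_mul,
        Matrix.cons_val_zero, WithLp.ofLp_toLp]
      ring
    simp only [h1]
    rw [intervalIntegral.integral_add ((iA.add (iB.const_mul ε)).add (iC.const_mul (ε^2)))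
        (iD.const_mul (ε^3)),
      intervalIntegral.integral_add (iA.add (iB.const_mul ε)) (iC.const_mul (ε^2)),
      intervalIntegral.integral_add iA (iB.const_mul ε),
      intervalIntegral.integral_const_mul, intervalIntegral.integral_const_mul,
      intervalIntegral.integral_const_mul]
  have hfun : (fun ε : ℝ =>
      -π * ∫ ρ in (0:ℝ)..1, ((Z ρ + ε • η ρ) 0) ^ 2 * (perp (Z' ρ + ε • η' ρ) 0))
      = fun ε : ℝ => -π * (A + ε*B + ε^2*C + ε^3*D) := funext fun ε => by rw [key ε]
  -- derivative of the polynomial at 0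
  have hpoly : HasDerivAt (fun ε : ℝ => -π * (A + ε*B + ε^2*C + ε^3*D)) (-π * B) 0 := by
    have h1 : HasDerivAt (fun ε : ℝ => ε * B) B 0 := by
      simpa using (hasDerivAt_id (0:ℝ)).mul_const B
    have h2 : HasDerivAt (fun ε : ℝ => ε^2 * C) 0 0 := by
      simpa using (hasDerivAt_pow 2 (0:ℝ)).mul_const C
    have h3 : HasDerivAt (fun ε : ℝ => ε^3 * D) 0 0 := by
      simpa using (hasDerivAt_pow 3 (0:ℝ)).mul_const D
    have := ((((hasDerivAt_const (0:ℝ) A).add h1).add h2).add h3).const_mul (-π)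
    simpa using this
  -- integration by parts
  have hibp : (∫ ρ in (0:ℝ)..1, (2*Z ρ 0*Z' ρ 0*η ρ 1 + (Z ρ 0)^2 * η' ρ 1)) = 0 := by
    have hd : ∀ ρ ∈ Set.uIcc (0:ℝ) 1,
        HasDerivAt (fun ρ => (Z ρ 0)^2 * η ρ 1)
          (2*Z ρ 0*Z' ρ 0*η ρ 1 + (Z ρ 0)^2 * η' ρ 1) ρ := by
      intro ρ hρ
      rw [huIcc] at hρ
      have := ((dZ 0 ρ hρ).fun_pow 2).fun_mul (dη 1 ρ hρ)
      refine this.congr_deriv ?_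
      ring
    have hint : IntervalIntegrable
        (fun ρ => 2*Z ρ 0*Z' ρ 0*η ρ 1 + (Z ρ 0)^2 * η' ρ 1) volume 0 1 :=
      (((((continuousOn_const.mul cZ0).mul cZ'0).mul cη1).add
        ((cZ0.pow 2).mul cη'1))).intervalIntegrable_of_Icc zero_le_one
    rw [intervalIntegral.integral_eq_sub_of_hasDerivAt hd hint, hbc0, hbc1]
    ring
  -- identify the derivative
  have hinner : ∀ ρ : ℝ, (inner ℝ (η ρ) (perp (Z' ρ)) : ℝ)
      = η ρ 0 * Z' ρ 1 - η ρ 1 * Z' ρ 0 := by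
    intro ρ
    simp only [perp, WithLp.ofLp_toLp, PiLp.inner_apply, RCLike.inner_apply, conj_trivial, Fin.sum_univ_two,
      Matrix.cons_val_zero, Matrix.cons_val_one, Matrix.head_cons]
    ring
  have iT : IntervalIntegrable (fun ρ => Z ρ 0 * (η ρ 0 * Z' ρ 1 - η ρ 1 * Z' ρ 0))
      volume 0 1 :=
    ((cZ0.mul ((cη0.mul cZ'1).sub (cη1.mul cZ'0)))).intervalIntegrable_of_Icc zero_le_one
  have hibp' : IntervalIntegrable
      (fun ρ => 2*Z ρ 0*Z' ρ 0*η ρ 1 + (Z ρ 0)^2 * η' ρ 1) volume 0 1 :=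
    (((((continuousOn_const.mul cZ0).mul cZ'0).mul cη1).add
      ((cZ0.pow 2).mul cη'1))).intervalIntegrable_of_Icc zero_le_one
  have hBeq : -π * B
      = -2 * π * ∫ ρ in (0:ℝ)..1, (Z ρ 0) * (inner ℝ (η ρ) (perp (Z' ρ)) : ℝ) := by
    have hcongr : (∫ ρ in (0:ℝ)..1, (Z ρ 0) * (inner ℝ (η ρ) (perp (Z' ρ)) : ℝ))
        = ∫ ρ in (0:ℝ)..1, Z ρ 0 * (η ρ 0 * Z' ρ 1 - η ρ 1 * Z' ρ 0) := by
      simp only [hinner]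
    have hsub : B - (∫ ρ in (0:ℝ)..1, (2*Z ρ 0*Z' ρ 0*η ρ 1 + (Z ρ 0)^2 * η' ρ 1))
        = ∫ ρ in (0:ℝ)..1, 2 * (Z ρ 0 * (η ρ 0 * Z' ρ 1 - η ρ 1 * Z' ρ 0)) := by
      rw [hB, ← intervalIntegral.integral_sub iB hibp']
      congr 1
      funext ρ
      ring
    rw [hibp, sub_zero, intervalIntegral.integral_const_mul] at hsub
    rw [hcongr, hsub]
    ring
  rw [hfun, ← hBeq]
  exact hpoly
end
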